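/- arXiv:math/0505693 — 2 statements merged into one kernel-verified Lean document; each statement's English description precedes it below -/
import Mathlib

section
/- The derivative of Θ(·;q) at z = 1 equals −∏_{n=1}^∞ (1-q^n)^3, i.e. d/dx Θ(x;q)|_{x=1} = −∏_{n≥1}(1-q^n)^3. -/
open Complex Filter

/-- The theta function `Θ(z;q) = (1-z)·∏_{n≥1}(1-q^n)(1-z q^n)(1-z⁻¹ q^n)`. -/
noncomputable def Theta (q : ℝ) (z : ℂ) : ℂ :=
  (1 - z) * ∏' n : ℕ,
    ((1 - (q : ℂ) ^ (n + 1)) * (1 - z * (q : ℂ) ^ (n + 1)) * (1 - z⁻¹ * (q : ℂ) ^ (n + 1)))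

lemma theta_prod_continuousAt (q : ℝ) (hq0 : 0 < q) (hq1 : q < 1) :
    ContinuousAt (fun z : ℂ => ∏' n : ℕ,
      ((1 - (q : ℂ) ^ (n + 1)) * (1 - z * (q : ℂ) ^ (n + 1)) * (1 - z⁻¹ * (q : ℂ) ^ (n + 1)))) 1 := by
  set c : ℂ := (q : ℂ) with hc
  set δ : ℝ := (1 - q) / 2 with hδ
  have hδ0 : 0 < δ := by rw [hδ]; linarith
  have hδ1 : δ < 1 := by rw [hδ]; linarith
  set A : ℝ := 2 / (1 + q) with hA
  have hA1 : 1 ≤ A := by rw [hA, le_div_iff₀ (by linarith)]; linarith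
  have hA0 : 0 < A := by linarith
  set ρ : ℝ := 2 * q / (1 + q) with hρ
  have hρ0 : 0 ≤ ρ := by rw [hρ]; positivity
  have hρ1 : ρ < 1 := by rw [hρ, div_lt_one (by linarith)]; linarith
  have hρinv : 0 < (1 - ρ)⁻¹ := inv_pos.2 (by linarith)
  set K : ℝ := ρ * (1 - ρ)⁻¹ / 2 + 1 with hK
  have hK0 : 0 < K := by
    have h1 : 0 ≤ ρ * (1 - ρ)⁻¹ := mul_nonneg hρ0 hρinv.le
    rw [hK]; linarith
  set s : Set ℂ := Metric.ball (1 : ℂ) δ with hs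
  have hmem : ∀ z ∈ s, ‖z - 1‖ < δ := by
    intro z hz; rwa [hs, Metric.mem_ball, dist_eq_norm] at hz
  have hz_le : ∀ z ∈ s, ‖z‖ ≤ A := by
    intro z hz
    have h1 : ‖z‖ ≤ ‖z - 1‖ + 1 := by
      calc ‖z‖ = ‖z - 1 + 1‖ := by ring_nf
      _ ≤ ‖z - 1‖ + ‖(1:ℂ)‖ := norm_add_le _ _
      _ = ‖z - 1‖ + 1 := by simp
    have h2 : 1 + δ ≤ A := by
      rw [hδ, hA, le_div_iff₀ (by linarith)]; nlinarith
    have := hmem z hz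
    linarith
  have hz_lb : ∀ z ∈ s, 1 - δ ≤ ‖z‖ := by
    intro z hz
    have h1 : ‖(1:ℂ)‖ ≤ ‖z‖ + ‖1 - z‖ := by
      calc ‖(1:ℂ)‖ = ‖z + (1 - z)‖ := by ring_nf
      _ ≤ ‖z‖ + ‖1 - z‖ := norm_add_le _ _
    have h2 : ‖1 - z‖ < δ := by rw [norm_sub_rev]; exact hmem z hz
    rw [norm_one] at h1; linarith
  have hz_ne : ∀ z ∈ s, z ≠ 0 := by
    intro z hz h0
    have := hz_lb z hz
    rw [h0] at this; simp at this; linarith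
  have hzinv_le : ∀ z ∈ s, ‖z⁻¹‖ ≤ A := by
    intro z hz
    have h1 : (0:ℝ) < 1 - δ := by linarith
    have h2 := hz_lb z hz
    rw [norm_inv]
    have hAinv : A⁻¹ = 1 - δ := by
      rw [hA, hδ]; field_simp; ring
    rw [inv_le_comm₀ (lt_of_lt_of_le h1 h2) hA0, hAinv]
    exact h2
  have h1s : (1:ℂ) ∈ s := by rw [hs]; exact Metric.mem_ball_self hδ0
  have hs_nhds : s ∈ nhds (1:ℂ) := by rw [hs]; exact Metric.ball_mem_nhds _ hδ0
  have hcn : ∀ n : ℕ, ‖c ^ (n+1)‖ = q ^ (n+1) := by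
    intro n
    rw [hc, norm_pow, Complex.norm_real, Real.norm_eq_abs, abs_of_pos hq0]
  have hAq : ∀ n : ℕ, A * q ^ (n+1) ≤ ρ := by
    intro n
    have hqn : q ^ (n+1) ≤ q := by
      calc q ^ (n+1) = q ^ n * q := pow_succ q n
      _ ≤ 1 * q := by
        apply mul_le_mul_of_nonneg_right _ hq0.le
        exact pow_le_one₀ hq0.le hq1.le
      _ = q := one_mul q
    have : A * q ^ (n+1) ≤ A * q := mul_le_mul_of_nonneg_left hqn hA0.le
    have hAqρ : A * q = ρ := by rw [hA, hρ]; ring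
    linarith
  have hAq0 : ∀ n : ℕ, 0 ≤ A * q ^ (n+1) := by
    intro n; positivity
  -- log bound
  have hlog : ∀ (n : ℕ) (w : ℂ), ‖w‖ ≤ A * q ^ (n+1) → ‖Complex.log (1 - w)‖ ≤ K * (A * q ^ (n+1)) := by
    intro n w h
    have hwρ : ‖w‖ ≤ ρ := h.trans (hAq n)
    have hw1 : ‖-w‖ < 1 := by rw [norm_neg]; linarith
    have hb := Complex.norm_log_one_add_le hw1
    rw [norm_neg] at hb
    have he : 1 + -w = 1 - w := by ring
    rw [he] at hb
    have e1 : ‖w‖ ^ 2 ≤ ‖w‖ * ρ := by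
      rw [sq]; exact mul_le_mul_of_nonneg_left hwρ (norm_nonneg w)
    have e2 : (1 - ‖w‖)⁻¹ ≤ (1 - ρ)⁻¹ := by
      apply inv_anti₀ (by linarith) (by linarith)
    have e3 : ‖w‖ ^ 2 * (1 - ‖w‖)⁻¹ / 2 + ‖w‖ ≤ K * ‖w‖ := by
      have e4 : ‖w‖ ^ 2 * (1 - ‖w‖)⁻¹ ≤ (‖w‖ * ρ) * (1 - ρ)⁻¹ := by
        exact mul_le_mul e1 e2 (inv_nonneg.2 (by linarith)) (mul_nonneg (norm_nonneg w) hρ0)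
      rw [hK]; nlinarith [norm_nonneg w]
    have e5 : K * ‖w‖ ≤ K * (A * q ^ (n+1)) := mul_le_mul_of_nonneg_left h hK0.le
    exact hb.trans (e3.trans e5)
  -- slitPlane facts
  have hslit : ∀ (n : ℕ) (w : ℂ), ‖w‖ ≤ A * q ^ (n+1) → (1 - w) ∈ Complex.slitPlane := by
    intro n w h
    have hwρ : ‖w‖ ≤ ρ := h.trans (hAq n)
    have : 1 + -w ∈ Complex.slitPlane :=
      Complex.mem_slitPlane_of_norm_lt_one (by rw [norm_neg]; linarith)
    simpa [sub_eq_add_neg] using this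
  have hne : ∀ (n : ℕ) (w : ℂ), ‖w‖ ≤ A * q ^ (n+1) → (1 - w) ≠ 0 := fun n w h =>
    Complex.slitPlane_ne_zero (hslit n w h)
  -- the three w norms
  have hw1 : ∀ (n : ℕ), ‖(c ^ (n+1) : ℂ)‖ ≤ A * q ^ (n+1) := by
    intro n
    rw [hcn n]
    nlinarith [pow_pos hq0 (n+1)]
  have hw2 : ∀ (n : ℕ), ∀ z ∈ s, ‖z * c ^ (n+1)‖ ≤ A * q ^ (n+1) := by
    intro n z hz
    rw [norm_mul, hcn n]
    exact mul_le_mul_of_nonneg_right (hz_le z hz) (pow_nonneg hq0.le _)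
  have hw3 : ∀ (n : ℕ), ∀ z ∈ s, ‖z⁻¹ * c ^ (n+1)‖ ≤ A * q ^ (n+1) := by
    intro n z hz
    rw [norm_mul, hcn n]
    exact mul_le_mul_of_nonneg_right (hzinv_le z hz) (pow_nonneg hq0.le _)
  -- define L and u
  set L : ℕ → ℂ → ℂ := fun n z =>
    Complex.log (1 - c ^ (n+1)) + Complex.log (1 - z * c ^ (n+1)) +
      Complex.log (1 - z⁻¹ * c ^ (n+1)) with hL
  set u : ℕ → ℝ := fun n => 3 * K * A * q ^ (n+1) with hu
  have hLbound : ∀ z ∈ s, ∀ n : ℕ, ‖L n z‖ ≤ u n := by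
    intro z hz n
    have b1 := hlog n _ (hw1 n)
    have b2 := hlog n _ (hw2 n z hz)
    have b3 := hlog n _ (hw3 n z hz)
    calc ‖L n z‖ ≤ ‖Complex.log (1 - c ^ (n+1)) + Complex.log (1 - z * c ^ (n+1))‖ +
        ‖Complex.log (1 - z⁻¹ * c ^ (n+1))‖ := norm_add_le _ _
    _ ≤ ‖Complex.log (1 - c ^ (n+1))‖ + ‖Complex.log (1 - z * c ^ (n+1))‖ +
        ‖Complex.log (1 - z⁻¹ * c ^ (n+1))‖ := by
        have := norm_add_le (Complex.log (1 - c ^ (n+1))) (Complex.log (1 - z * c ^ (n+1)))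
        linarith
    _ ≤ K * (A * q ^ (n+1)) + K * (A * q ^ (n+1)) + K * (A * q ^ (n+1)) :=
        add_le_add (add_le_add b1 b2) b3
    _ = u n := by rw [hu]; ring
  have hu_sum : Summable u := by
    have h1 : Summable (fun n : ℕ => (3 * K * A * q) * q ^ n) :=
      (summable_geometric_of_lt_one hq0.le hq1).mul_left _
    apply h1.congr
    intro n
    rw [hu]; ring
  -- summability and continuity of S
  have hLsum : ∀ z ∈ s, Summable (fun n => L n z) := by
    intro z hz
    exact Summable.of_norm_bounded hu_sum (hLbound z hz)
  set S : ℂ → ℂ := fun z => ∑' n, L n z with hS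
  have hScont : ContinuousOn S s := by
    apply (tendstoUniformlyOn_tsum hu_sum (fun n z hz => hLbound z hz n)).continuousOn
    apply Filter.Frequently.of_forall
    intro t
    apply continuousOn_finset_sum
    intro n _
    rw [hL]
    apply ContinuousOn.add
    apply ContinuousOn.add
    · exact continuousOn_const
    · apply ContinuousOn.clog (continuousOn_const.sub (continuousOn_id.mul continuousOn_const))
      intro z hz
      exact hslit n _ (hw2 n z hz)
    · apply ContinuousOn.clog
        (continuousOn_const.sub ((continuousOn_id.inv₀ hz_ne).mul continuousOn_const))
      intro z hz
      exact hslit n _ (hw3 n z hz)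
  -- product equals exp of S on s
  have hprod : ∀ z ∈ s, (∏' n : ℕ,
      ((1 - c ^ (n+1)) * (1 - z * c ^ (n+1)) * (1 - z⁻¹ * c ^ (n+1)))) = Complex.exp (S z) := by
    intro z hz
    have h1 : HasProd (fun n => Complex.exp (L n z)) (Complex.exp (S z)) :=
      (hLsum z hz).hasSum.cexp
    have h2 : (fun n => Complex.exp (L n z)) = fun n : ℕ =>
        ((1 - c ^ (n+1)) * (1 - z * c ^ (n+1)) * (1 - z⁻¹ * c ^ (n+1))) := by
      funext n
      rw [hL]
      rw [Complex.exp_add, Complex.exp_add,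
        Complex.exp_log (hne n _ (hw1 n)),
        Complex.exp_log (hne n _ (hw2 n z hz)),
        Complex.exp_log (hne n _ (hw3 n z hz))]
    rw [h2] at h1
    exact h1.tprod_eq
  -- conclude
  have hcontexp : ContinuousAt (fun z => Complex.exp (S z)) 1 :=
    Complex.continuous_exp.continuousAt.comp ((hScont 1 h1s).continuousAt hs_nhds)
  apply hcontexp.congr
  apply Filter.eventuallyEq_of_mem hs_nhds
  intro z hz
  exact (hprod z hz).symm

theorem theta_deriv_at_one (q : ℝ) (hq0 : 0 < q) (hq1 : q < 1) :
    deriv (Theta q) 1 = -∏' n : ℕ, (1 - (q : ℂ) ^ (n + 1)) ^ 3 := by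
  set F : ℂ → ℂ := fun z => ∏' n : ℕ,
    ((1 - (q : ℂ) ^ (n + 1)) * (1 - z * (q : ℂ) ^ (n + 1)) * (1 - z⁻¹ * (q : ℂ) ^ (n + 1)))
    with hF
  have hcont : ContinuousAt F 1 := theta_prod_continuousAt q hq0 hq1
  have hF1 : F 1 = ∏' n : ℕ, (1 - (q : ℂ) ^ (n + 1)) ^ 3 := by
    rw [hF]
    apply tprod_congr
    intro n
    rw [inv_one]
    ring
  have hder : HasDerivAt (Theta q) (-(F 1)) 1 := by
    rw [hasDerivAt_iff_tendsto_slope]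
    have heq : ∀ᶠ z in nhdsWithin (1:ℂ) {(1:ℂ)}ᶜ, -F z = slope (Theta q) 1 z := by
      filter_upwards [self_mem_nhdsWithin] with z hz
      have hz1 : z - 1 ≠ 0 := sub_ne_zero.2 hz
      have hTz : Theta q z = (1 - z) * F z := rfl
      have hT1 : Theta q 1 = 0 := by
        rw [Theta]
        simp
      rw [slope_def_field, hTz, hT1]
      field_simp
      ring
    apply Tendsto.congr' heq
    exact (hcont.neg.tendsto).mono_left nhdsWithin_le_nhds
  rw [hder.deriv, hF1]
end

section
/- Fix 0 < q < 1 and ε > 0, and let (c_m)_{m∈ℤ} satisfy |c_m| ≤ e^{-ε m²}. Then for every integer k, the function z ↦ ∑_{m∈ℤ} c_m/(z−q^m) is bounded on the circle |z| = q^{k+1/2} uniformly in k, and its supremum over that circle tends to 0 as k → −∞. -/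
open Real Filter Topology

set_option maxHeartbeats 1000000 in
theorem interpolant_bounds (q : ℝ) (hq0 : 0 < q) (hq1 : q < 1) (ε : ℝ) (hε : 0 < ε)
    (c : ℤ → ℂ) (hc : ∀ m : ℤ, ‖c m‖ ≤ Real.exp (-ε * m ^ 2)) :
    (∀ k : ℤ, ∀ z : ℂ, ‖z‖ = q ^ ((k : ℝ) + 1 / 2) →
        Summable fun m : ℤ => c m / (z - (q : ℂ) ^ m)) ∧
    (∃ B : ℝ, ∀ k : ℤ, ∀ z : ℂ, ‖z‖ = q ^ ((k : ℝ) + 1 / 2) →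
        ‖∑' m : ℤ, c m / (z - (q : ℂ) ^ m)‖ ≤ B) ∧
    (∀ δ > 0, ∃ K : ℤ, ∀ k : ℤ, k ≤ K → ∀ z : ℂ,
        ‖z‖ = q ^ ((k : ℝ) + 1 / 2) →
        ‖∑' m : ℤ, c m / (z - (q : ℂ) ^ m)‖ ≤ δ) := by
  set s : ℝ := q ^ ((1:ℝ)/2) with hs_def
  have hs0 : 0 < s := Real.rpow_pos_of_pos hq0 _
  have hs1 : s < 1 := Real.rpow_lt_one hq0.le hq1 (by norm_num)
  have hss : s * s = q := by
    rw [hs_def, ← Real.rpow_add hq0]; norm_num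
  have h1s : 0 < 1 - s := by linarith
  have habsq : ∀ m : ℤ, ‖(q:ℂ) ^ m‖ = q ^ (m:ℝ) := by
    intro m
    rw [norm_zpow, Complex.norm_of_nonneg hq0.le, ← Real.rpow_intCast]
  have hqm : ∀ m : ℤ, (0:ℝ) < q ^ (m:ℝ) := fun m => Real.rpow_pos_of_pos hq0 _
  -- lower bound 1 : uniform in k
  have key1 : ∀ (k m : ℤ) (z : ℂ), ‖z‖ = q ^ ((k:ℝ) + 1/2) →
      (1 - s) * q ^ (m:ℝ) ≤ ‖z - (q:ℂ) ^ m‖ := by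
    intro k m z hz
    have h := abs_norm_sub_norm_le z ((q:ℂ) ^ m)
    rw [hz, habsq m] at h
    refine le_trans ?_ h
    have hB := hqm m
    rcases le_or_gt m k with hmk | hmk
    · have hmk' : (m:ℝ) ≤ (k:ℝ) := by exact_mod_cast hmk
      have h2 : q ^ ((k:ℝ) + 1/2) ≤ q ^ (m:ℝ) * s := by
        rw [hs_def, ← Real.rpow_add hq0]
        exact Real.rpow_le_rpow_of_exponent_ge hq0 hq1.le (by linarith)
      rw [abs_of_nonpos (by nlinarith)]
      nlinarith
    · have hmk' : (k:ℝ) + 1 ≤ (m:ℝ) := by exact_mod_cast hmk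
      have hsinv : s * s⁻¹ = 1 := mul_inv_cancel₀ hs0.ne'
      have h2 : q ^ (m:ℝ) * s⁻¹ ≤ q ^ ((k:ℝ) + 1/2) := by
        have hrw : q ^ ((m:ℝ) - 1/2) = q ^ (m:ℝ) * s⁻¹ := by
          rw [hs_def, ← Real.rpow_neg hq0.le, ← Real.rpow_add hq0, sub_eq_add_neg]
        rw [← hrw]
        exact Real.rpow_le_rpow_of_exponent_ge hq0 hq1.le (by linarith)
      have hsle : q ^ (m:ℝ) ≤ q ^ (m:ℝ) * s⁻¹ := by
        nlinarith [mul_pos hB hs0]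
      rw [abs_of_nonneg (by linarith)]
      nlinarith [mul_nonneg hB.le (sq_nonneg (1 - s)), mul_pos hB hs0]
  -- lower bound 2 : decaying in k
  have key2 : ∀ (k m : ℤ) (z : ℂ), ‖z‖ = q ^ ((k:ℝ) + 1/2) →
      (1 - s) * q ^ ((k:ℝ) + 1) ≤ ‖z - (q:ℂ) ^ m‖ := by
    intro k m z hz
    have h := abs_norm_sub_norm_le z ((q:ℂ) ^ m)
    rw [hz, habsq m] at h
    refine le_trans ?_ h
    have hk : (0:ℝ) < q ^ (k:ℝ) := Real.rpow_pos_of_pos hq0 _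
    have hk12 : q ^ ((k:ℝ) + 1/2) = q ^ (k:ℝ) * s := by
      rw [hs_def, ← Real.rpow_add hq0]
    have hk1 : q ^ ((k:ℝ) + 1) = q ^ (k:ℝ) * q :=
      Real.rpow_add_one hq0.ne' _
    have hqs : q ≤ s := by nlinarith
    rcases le_or_gt m k with hmk | hmk
    · have hmk' : (m:ℝ) ≤ (k:ℝ) := by exact_mod_cast hmk
      have h2 : q ^ (k:ℝ) ≤ q ^ (m:ℝ) :=
        Real.rpow_le_rpow_of_exponent_ge hq0 hq1.le hmk'
      rw [abs_of_nonpos (by nlinarith [hqm m]), hk12, hk1]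
      nlinarith [mul_nonneg (mul_nonneg h1s.le hk.le) (by linarith : (0:ℝ) ≤ 1 - q)]
    · have hmk' : (k:ℝ) + 1 ≤ (m:ℝ) := by exact_mod_cast hmk
      have h2 : q ^ (m:ℝ) ≤ q ^ ((k:ℝ) + 1) :=
        Real.rpow_le_rpow_of_exponent_ge hq0 hq1.le hmk'
      rw [abs_of_nonneg (by nlinarith [hqm m]), hk12, hk1]
      nlinarith [mul_nonneg (mul_nonneg hk.le hs0.le) (sq_nonneg (1 - s)), hqm m]
  -- the two comparison sequences
  set G : ℤ → ℝ := fun m => Real.exp (-ε * m ^ 2) / ((1 - s) * q ^ (m:ℝ)) with hG_def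
  set H : ℤ → ℤ → ℝ :=
    fun k m => Real.exp (-ε * m ^ 2) / ((1 - s) * q ^ ((k:ℝ) + 1)) with hH_def
  have hGpos : ∀ m, 0 < G m := fun m =>
    div_pos (Real.exp_pos _) (mul_pos h1s (hqm m))
  have hHpos : ∀ k m, 0 < H k m := fun k m =>
    div_pos (Real.exp_pos _) (mul_pos h1s (Real.rpow_pos_of_pos hq0 _))
  -- Summability of G
  have hGsum : Summable G := by
    have h0 : Summable (fun m : ℤ =>
        (|m| ^ 0 : ℝ) * Real.exp (-π * ((ε/π) * m ^ 2 - 2 * (|Real.log q|/(2*π)) * |m|))) :=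
      summable_pow_mul_jacobiTheta₂_term_bound (|Real.log q|/(2*π)) (div_pos hε pi_pos) 0
    have h1 : Summable (fun m : ℤ =>
        Real.exp (-ε * m ^ 2 + |Real.log q| * |(m:ℝ)|) / (1 - s)) := by
      apply Summable.div_const
      refine h0.congr fun m => ?_
      rw [pow_zero, one_mul]
      congr 1
      rw [Int.cast_abs]
      field_simp
      ring
    refine Summable.of_nonneg_of_le (fun m => (hGpos m).le) (fun m => ?_) h1
    rw [hG_def]
    simp only
    rw [Real.rpow_def_of_pos hq0, mul_comm (1 - s), ← div_div, ← Real.exp_sub]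
    gcongr
    have := neg_abs_le (Real.log q * (m:ℝ))
    rw [abs_mul] at this
    linarith
  -- termwise bounds
  have hterm1 : ∀ (k : ℤ) (z : ℂ), ‖z‖ = q ^ ((k:ℝ) + 1/2) →
      ∀ m : ℤ, ‖c m / (z - (q:ℂ) ^ m)‖ ≤ G m := by
    intro k z hz m
    rw [norm_div]
    exact div_le_div₀ (Real.exp_pos _).le (hc m) (mul_pos h1s (hqm m)) (key1 k m z hz)
  have hterm2 : ∀ (k : ℤ) (z : ℂ), ‖z‖ = q ^ ((k:ℝ) + 1/2) →
      ∀ m : ℤ, ‖c m / (z - (q:ℂ) ^ m)‖ ≤ H k m := by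
    intro k z hz m
    rw [norm_div]
    exact div_le_div₀ (Real.exp_pos _).le (hc m)
      (mul_pos h1s (Real.rpow_pos_of_pos hq0 _)) (key2 k m z hz)
  -- Part 1: summability
  have part1 : ∀ k : ℤ, ∀ z : ℂ, ‖z‖ = q ^ ((k:ℝ) + 1/2) →
      Summable fun m : ℤ => c m / (z - (q:ℂ) ^ m) := by
    intro k z hz
    exact Summable.of_norm_bounded hGsum (fun m => hterm1 k z hz m)
  have hnormsum : ∀ k : ℤ, ∀ z : ℂ, ‖z‖ = q ^ ((k:ℝ) + 1/2) →
      Summable fun m : ℤ => ‖c m / (z - (q:ℂ) ^ m)‖ := by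
    intro k z hz
    refine Summable.of_nonneg_of_le (fun m => norm_nonneg _) (fun m => ?_) hGsum
    exact hterm1 k z hz m
  refine ⟨part1, ⟨∑' m, G m, ?_⟩, ?_⟩
  · -- Part 2: uniform bound
    intro k z hz
    refine le_trans (norm_tsum_le_tsum_norm (hnormsum k z hz))
      (Summable.tsum_le_tsum (fun m => ?_) (hnormsum k z hz) hGsum)
    exact hterm1 k z hz m
  · -- Part 3: decay
    intro δ hδ
    set F : ℤ → ℝ := fun k => ∑' m : ℤ, min (G m) (H k m) with hF_def
    have hFsum : ∀ k, Summable fun m => min (G m) (H k m) := fun k =>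
      Summable.of_nonneg_of_le (fun m => le_min (hGpos m).le (hHpos k m).le)
        (fun m => min_le_left _ _) hGsum
    have hFbound : ∀ k : ℤ, ∀ z : ℂ, ‖z‖ = q ^ ((k:ℝ) + 1/2) →
        ‖∑' m : ℤ, c m / (z - (q:ℂ) ^ m)‖ ≤ F k := by
      intro k z hz
      refine le_trans (norm_tsum_le_tsum_norm (hnormsum k z hz))
        (Summable.tsum_le_tsum (fun m => ?_) (hnormsum k z hz) (hFsum k))
      exact le_min (hterm1 k z hz m) (hterm2 k z hz m)
    have hHtend : ∀ m : ℤ, Tendsto (fun k : ℤ => H k m) atBot (𝓝 0) := by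
      intro m
      have h1 : Tendsto (fun k : ℤ => (k:ℝ) + 1) atBot atBot :=
        tendsto_atBot_add_const_right _ _ (tendsto_intCast_atBot_iff.mpr tendsto_id)
      have h3 : Tendsto (fun k : ℤ => (1 - s) * q ^ ((k:ℝ) + 1)) atBot atTop :=
        ((tendsto_rpow_atBot_of_base_lt_one q hq0 hq1).comp h1).const_mul_atTop h1s
      exact Tendsto.div_atTop tendsto_const_nhds h3
    have hFtend : Tendsto F atBot (𝓝 0) := by
      have := tendsto_tsum_of_dominated_convergence (𝓕 := (atBot : Filter ℤ))
        (f := fun k m => min (G m) (H k m)) (g := fun _ : ℤ => (0:ℝ)) (bound := G)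
        hGsum
        (fun m => by
          apply squeeze_zero (fun k => le_min (hGpos m).le (hHpos k m).le)
            (fun k => min_le_right _ _) (hHtend m))
        (Eventually.of_forall fun k m => by
          rw [Real.norm_eq_abs, abs_of_nonneg (le_min (hGpos m).le (hHpos k m).le)]
          exact min_le_left _ _)
      rw [show (∑' _ : ℤ, (0:ℝ)) = 0 from tsum_zero] at this
      exact this
    have hev : ∀ᶠ k : ℤ in atBot, F k < δ := hFtend.eventually_lt_const hδ
    obtain ⟨K, hK⟩ := eventually_atBot.mp hev
    exact ⟨K, fun k hk z hz => (hFbound k z hz).trans (hK k hk).le⟩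
end
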